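/- arXiv:1012.0182 — 4 statements merged into one kernel-verified Lean document; each statement's English description precedes it below -/
import Mathlib

section
/- For the real Grassmannian Gr_k(n) of k-dimensional subspaces of ℝ^n with 1 ≤ k ≤ n−1, the combinatorial orientability criterion for type A_{n−1} holds if and only if n is even; equivalently: for the simple root α_k of A_{n−1}, the sum Σ_{β ∈ ⟨Θ⟩⁺} ⟨α_k∨, β⟩ with Θ = Σ \ {α_k} is even if and only if n ≡ 0 (mod 2). -/
open RealInnerProductSpace

/-- The pairing `⟨α∨, β⟩ = 2⟨α,β⟩/⟨α,α⟩`. -/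
noncomputable def pairing {V : Type*} [NormedAddCommGroup V] [InnerProductSpace ℝ V]
    (α β : V) : ℝ := 2 * ⟪α, β⟫ / ⟪α, α⟫

/-- The reflection `r_α(β) = β − ⟨α∨, β⟩α`. -/
noncomputable def reflect {V : Type*} [NormedAddCommGroup V] [InnerProductSpace ℝ V]
    (α β : V) : V := β - pairing α β • α

/-- A (possibly non-reduced) root system in a real inner product space. -/
def IsRootSystem {V : Type*} [NormedAddCommGroup V] [InnerProductSpace ℝ V]
    (Φ : Finset V) : Prop :=
  (∀ α ∈ Φ, α ≠ 0) ∧ (∀ α ∈ Φ, ∀ β ∈ Φ, reflect α β ∈ Φ) ∧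
  (∀ α ∈ Φ, ∀ β ∈ Φ, ∃ n : ℤ, pairing α β = n)

/-- A choice of positive roots: for each root exactly one of `β`, `-β` is positive. -/
def IsPositiveSystem {V : Type*} [NormedAddCommGroup V] [InnerProductSpace ℝ V]
    (Φ ΦP : Finset V) : Prop :=
  ΦP ⊆ Φ ∧ ∀ β ∈ Φ, Xor' (β ∈ ΦP) (-β ∈ ΦP)

/-- A simple system: every positive root is a nonnegative integer combination of simple roots. -/
def IsSimpleSystem {V : Type*} [NormedAddCommGroup V] [InnerProductSpace ℝ V]
    (ΦP S : Finset V) : Prop :=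
  S ⊆ ΦP ∧ ∀ β ∈ ΦP, ∃ c : V → ℕ, β = ∑ γ ∈ S, (c γ : ℝ) • γ

/-- Grassmannian criterion in type `A_{n−1}`: for `Θ = Σ \ {α_k}`, the sum
`Σ_{β ∈ ⟨Θ⟩⁺} ⟨α_k∨, β⟩` is even if and only if `n` is even.  (This encodes that
`Gr_k(n)` is orientable iff `n` is even.) -/
theorem stmt15 (n k : ℕ) (hk1 : 1 ≤ k) (hk2 : k < n) :
    ((∃ m : ℤ,
      (∑ p ∈ Finset.univ.filter
          (fun p : Fin n × Fin n => p.1 < p.2 ∧ (p.2.val < k ∨ k ≤ p.1.val)),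
        pairing
          (EuclideanSpace.single (⟨k - 1, by omega⟩ : Fin n) (1 : ℝ)
            - EuclideanSpace.single (⟨k, by omega⟩ : Fin n) (1 : ℝ))
          (EuclideanSpace.single p.1 (1 : ℝ) - EuclideanSpace.single p.2 (1 : ℝ)))
        = 2 * m) ↔ Even n) := by
  have ha : k - 1 < n := by omega
  set a : Fin n := ⟨k - 1, ha⟩ with ha'
  set b : Fin n := ⟨k, hk2⟩ with hb'
  have hab : a ≠ b := by
    simp only [ne_eq, ha', hb', Fin.mk.injEq]
    omega
  set P : Finset (Fin n × Fin n) := Finset.univ.filter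
      (fun p : Fin n × Fin n => p.1 < p.2 ∧ (p.2.val < k ∨ k ≤ p.1.val)) with hP
  have key : ∀ p ∈ P,
      pairing (EuclideanSpace.single a (1:ℝ) - EuclideanSpace.single b 1)
        (EuclideanSpace.single p.1 (1:ℝ) - EuclideanSpace.single p.2 1)
      = (((if p.1 = a then (1:ℝ) else 0) - (if p.1 = b then 1 else 0))
        - ((if p.2 = a then 1 else 0) - (if p.2 = b then 1 else 0))) := by
    intro p _
    have h2 : ⟪EuclideanSpace.single a (1:ℝ) - EuclideanSpace.single b 1,
        EuclideanSpace.single a (1:ℝ) - EuclideanSpace.single b 1⟫ = 2 := by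
      simp only [inner_sub_left, inner_sub_right, EuclideanSpace.inner_single_left,
        EuclideanSpace.single_apply, hab, hab.symm, if_true, if_false]
      norm_num
    rw [pairing, h2]
    simp [ inner_sub_left, inner_sub_right, EuclideanSpace.inner_single_left,
      EuclideanSpace.single_apply, hab, hab.symm, eq_comm]
  rw [Finset.sum_congr rfl key]
  have c1 : P.filter (fun p => p.1 = a) = ∅ := by
    ext p
    simp only [hP, Finset.mem_filter, Finset.mem_univ, true_and, Finset.notMem_empty,
      iff_false, Fin.lt_def, Fin.ext_iff, ha', hb', not_and, and_imp]
    omega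
  have c2 : P.filter (fun p => p.1 = b) = {b} ×ˢ Finset.Ioi b := by
    ext p
    simp only [hP, Finset.mem_filter, Finset.mem_univ, true_and, Finset.mem_product,
      Finset.mem_singleton, Finset.mem_Ioi, Fin.lt_def, Fin.ext_iff, ha', hb']
    omega
  have c3 : P.filter (fun p => p.2 = a) = Finset.Iio a ×ˢ {a} := by
    ext p
    simp only [hP, Finset.mem_filter, Finset.mem_univ, true_and, Finset.mem_product,
      Finset.mem_singleton, Finset.mem_Iio, Fin.lt_def, Fin.ext_iff, ha', hb']
    omega
  have c4 : P.filter (fun p => p.2 = b) = ∅ := by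
    ext p
    simp only [hP, Finset.mem_filter, Finset.mem_univ, true_and, Finset.notMem_empty,
      iff_false, Fin.lt_def, Fin.ext_iff, ha', hb', not_and, and_imp]
    omega
  have hsum : (∑ p ∈ P,
      (((if p.1 = a then (1:ℝ) else 0) - (if p.1 = b then 1 else 0))
        - ((if p.2 = a then 1 else 0) - (if p.2 = b then 1 else 0)))) = 2 - n := by
    simp only [Finset.sum_sub_distrib]
    rw [Finset.sum_boole, Finset.sum_boole, Finset.sum_boole, Finset.sum_boole,
      c1, c2, c3, c4]
    simp only [Finset.card_empty, Finset.card_product, Finset.card_singleton,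
      Fin.card_Ioi, Fin.card_Iio, ha', hb']
    push_cast [Nat.cast_sub (by omega : k ≤ n - 1), Nat.cast_sub (by omega : 1 ≤ n),
      Nat.cast_sub hk1]
    ring
  rw [hsum]
  constructor
  · rintro ⟨m, hm⟩
    have : (2 : ℤ) - n = 2 * m := by exact_mod_cast hm
    have : (n : ℤ) = 2 * (1 - m) := by omega
    have : Even (n : ℤ) := ⟨1 - m, by omega⟩
    exact_mod_cast this
  · rintro ⟨t, ht⟩
    exact ⟨1 - t, by push_cast [ht]; ring⟩
end

section
/- In type A_{l} (roots e_i − e_j in ℝ^{l+1}), given dimensions 0 = d_0 < d_1 < ⋯ < d_k < d_{k+1} = l+1 and Θ = Σ \ {α_{d_1},…,α_{d_k}}, the parity condition 'Σ_{β ∈ ⟨Θ⟩⁺} ⟨α∨, β⟩ ≡ 0 (mod 2) for every α ∈ Σ \ Θ' holds if and only if all the differences d_{i+1} − d_i (i = 0,…,k) are congruent modulo 2. -/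
open RealInnerProductSpace

lemma inner_ss {n : ℕ} (i j : Fin n) :
    ⟪EuclideanSpace.single i (1:ℝ), EuclideanSpace.single j (1:ℝ)⟫ =
      if i = j then (1:ℝ) else 0 := by
  rw [EuclideanSpace.inner_single_left, EuclideanSpace.single_apply]
  simp [eq_comm]

lemma pairing_single {n : ℕ} (a b i j : Fin n) (hab : a ≠ b) (hij : i ≠ j) :
    pairing (EuclideanSpace.single a (1:ℝ) - EuclideanSpace.single b 1)
      (EuclideanSpace.single i (1:ℝ) - EuclideanSpace.single j 1) =
    (if i = a then (1:ℝ) else 0) - (if j = a then 1 else 0)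
      - (if i = b then 1 else 0) + (if j = b then 1 else 0) := by
  simp only [pairing, inner_sub_left, inner_sub_right, inner_ss,
    if_pos rfl, if_true, if_neg hab, if_neg (fun h : b = a => hab h.symm),
    eq_comm (a := i), eq_comm (a := j)]
  ring

lemma card_fin_filter (n lo hi : ℕ) (h : hi ≤ n) :
    (Finset.univ.filter (fun i : Fin n => lo ≤ i.val ∧ i.val < hi)).card = hi - lo := by
  rw [← Nat.card_Ico]
  apply Finset.card_bij (fun i _ => i.val)
  · intro i hi; simp at hi ⊢; omega
  · intro i _ j _ h; exact Fin.val_injective h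
  · intro m hm; simp at hm
    exact ⟨⟨m, by omega⟩, by simp; omega, rfl⟩

lemma sum_eq (l k : ℕ) (d : Fin (k + 2) → ℕ) (hmono : StrictMono d)
    (hlast : d (Fin.last (k + 1)) = l + 1) (t : Fin k) (a b : Fin (l + 1))
    (ha : a.val + 1 = d t.succ.castSucc) (hb : b.val = d t.succ.castSucc) :
    (∑ p ∈ Finset.univ.filter
        (fun p : Fin (l + 1) × Fin (l + 1) => p.1 < p.2 ∧
          ∃ s : Fin (k + 1), d s.castSucc ≤ p.1.val ∧ p.2.val < d s.succ),
      pairing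
        (EuclideanSpace.single a (1 : ℝ) - EuclideanSpace.single b (1 : ℝ))
        (EuclideanSpace.single p.1 (1 : ℝ) - EuclideanSpace.single p.2 (1 : ℝ)))
    = -(((a.val - d t.castSucc.castSucc : ℕ) : ℝ))
      - ((d t.succ.succ - (b.val + 1) : ℕ) : ℝ) := by
  have hab : a ≠ b := by
    intro h; rw [h] at ha; omega
  have hle : ∀ {i j : Fin (k+2)}, d i ≤ d j ↔ i.val ≤ j.val := by
    intro i j; rw [hmono.le_iff_le, Fin.le_def]
  have hcs : t.castSucc.succ = t.succ.castSucc := rfl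
  set S := Finset.univ.filter
      (fun p : Fin (l + 1) × Fin (l + 1) => p.1 < p.2 ∧
        ∃ s : Fin (k + 1), d s.castSucc ≤ p.1.val ∧ p.2.val < d s.succ) with hS
  have hmem : ∀ p : Fin (l+1) × Fin (l+1), p ∈ S ↔ (p.1 < p.2 ∧
      ∃ s : Fin (k + 1), d s.castSucc ≤ p.1.val ∧ p.2.val < d s.succ) := by
    intro p; simp [hS]
  rw [Finset.sum_congr rfl (fun p hp => pairing_single a b p.1 p.2 hab
    (Fin.ne_of_lt ((hmem p).1 hp).1))]
  rw [Finset.sum_add_distrib, Finset.sum_sub_distrib, Finset.sum_sub_distrib]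
  rw [Finset.sum_boole, Finset.sum_boole, Finset.sum_boole, Finset.sum_boole]
  -- first filter is empty
  have h1 : S.filter (fun p => p.1 = a) = ∅ := by
    rw [Finset.filter_eq_empty_iff]
    intro p hp hpa
    obtain ⟨hlt, s, hs1, hs2⟩ := (hmem p).1 hp
    rw [hpa] at hlt hs1
    have hs : s.val < t.val + 1 := by
      have := hmono.lt_iff_lt.1 (show d s.castSucc < d t.succ.castSucc by omega)
      simpa [Fin.lt_def] using this
    have hss : d s.succ ≤ d t.succ.castSucc := hle.2 (by simp; omega)
    have := Fin.lt_def.1 hlt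
    omega
  -- fourth filter is empty
  have h4 : S.filter (fun p => p.2 = b) = ∅ := by
    rw [Finset.filter_eq_empty_iff]
    intro p hp hpb
    obtain ⟨hlt, s, hs1, hs2⟩ := (hmem p).1 hp
    rw [hpb] at hlt hs2
    have hs : t.val + 1 ≤ s.val := by
      have := hmono.lt_iff_lt.1 (show d t.succ.castSucc < d s.succ by omega)
      simpa [Fin.lt_def] using this
    have hss : d t.succ.castSucc ≤ d s.castSucc := hle.2 (by simp; omega)
    have := Fin.lt_def.1 hlt
    omega
  -- second filter card
  have h2 : (S.filter (fun p => p.2 = a)).card = a.val - d t.castSucc.castSucc := by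
    rw [← card_fin_filter (l+1) (d t.castSucc.castSucc) a.val (by omega)]
    apply Finset.card_bij (fun p _ => p.1)
    · intro p hp
      simp only [Finset.mem_filter] at hp
      obtain ⟨hpS, hpa⟩ := hp
      obtain ⟨hlt, s, hs1, hs2⟩ := (hmem p).1 hpS
      rw [hpa] at hlt hs2
      simp only [Finset.mem_filter, Finset.mem_univ, true_and]
      refine ⟨?_, Fin.lt_def.1 hlt⟩
      have hs : t.val ≤ s.val := by
        have := hle.1 (show d t.succ.castSucc ≤ d s.succ by omega)
        simpa using this
      have : d t.castSucc.castSucc ≤ d s.castSucc := hle.2 (by simp; omega)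
      omega
    · intro p hp q hq h
      simp only [Finset.mem_filter] at hp hq
      exact Prod.ext h (hp.2.trans hq.2.symm)
    · intro m hm
      simp only [Finset.mem_filter, Finset.mem_univ, true_and] at hm
      refine ⟨(⟨m, by omega⟩, a), ?_, rfl⟩
      simp only [Finset.mem_filter]
      refine ⟨(hmem _).2 ⟨?_, t.castSucc, ?_, ?_⟩, by trivial⟩
      · exact Fin.lt_def.2 (by simp; omega)
      · simp; omega
      · rw [hcs]; simp; rw [hcs]; omega
  -- third filter card
  have h3 : (S.filter (fun p => p.1 = b)).card = d t.succ.succ - (b.val + 1) := by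
    have hd2 : d t.succ.succ ≤ l + 1 := by
      rw [← hlast, hle]; simp [Fin.last]
    rw [← card_fin_filter (l+1) (b.val+1) (d t.succ.succ) hd2]
    apply Finset.card_bij (fun p _ => p.2)
    · intro p hp
      simp only [Finset.mem_filter] at hp
      obtain ⟨hpS, hpb⟩ := hp
      obtain ⟨hlt, s, hs1, hs2⟩ := (hmem p).1 hpS
      rw [hpb] at hlt hs1
      simp only [Finset.mem_filter, Finset.mem_univ, true_and]
      refine ⟨by have := Fin.lt_def.1 hlt; omega, ?_⟩
      have hs : s.val ≤ t.val + 1 := by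
        have := hle.1 (show d s.castSucc ≤ d t.succ.castSucc by omega)
        simpa using this
      have : d s.succ ≤ d t.succ.succ := hle.2 (by simp; omega)
      omega
    · intro p hp q hq h
      simp only [Finset.mem_filter] at hp hq
      exact Prod.ext (hp.2.trans hq.2.symm) h
    · intro m hm
      simp only [Finset.mem_filter, Finset.mem_univ, true_and] at hm
      refine ⟨(b, ⟨m, by omega⟩), ?_, rfl⟩
      simp only [Finset.mem_filter]
      refine ⟨(hmem _).2 ⟨?_, t.succ, ?_, ?_⟩, by trivial⟩
      · exact Fin.lt_def.2 (by simp; omega)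
      · simp; rw [hcs]; omega
      · simp; omega
  rw [h1, h4, h2, h3]
  simp

/-- Orientability criterion for the flag manifold `𝔽(d₁,…,d_k)` of type `A_l`:
with `0 = d₀ < d₁ < ⋯ < d_k < d_{k+1} = l+1` and `Θ = Σ \ {α_{d₁},…,α_{d_k}}`,
the parity condition `Σ_{β ∈ ⟨Θ⟩⁺} ⟨α∨, β⟩ ≡ 0 (mod 2)` for every `α ∈ Σ \ Θ`
holds iff all the differences `d_{i+1} − d_i` are congruent mod 2. -/
theorem stmt16 (l k : ℕ) (d : Fin (k + 2) → ℕ) (hmono : StrictMono d)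
    (h0 : d 0 = 0) (hlast : d (Fin.last (k + 1)) = l + 1) :
    ((∀ t : Fin k, ∀ a b : Fin (l + 1),
        a.val + 1 = d t.succ.castSucc → b.val = d t.succ.castSucc →
        ∃ m : ℤ,
          (∑ p ∈ Finset.univ.filter
              (fun p : Fin (l + 1) × Fin (l + 1) => p.1 < p.2 ∧
                ∃ s : Fin (k + 1), d s.castSucc ≤ p.1.val ∧ p.2.val < d s.succ),
            pairing
              (EuclideanSpace.single a (1 : ℝ) - EuclideanSpace.single b (1 : ℝ))
              (EuclideanSpace.single p.1 (1 : ℝ) - EuclideanSpace.single p.2 (1 : ℝ)))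
            = 2 * m) ↔
      (∀ i j : Fin (k + 1),
        (d i.succ - d i.castSucc) % 2 = (d j.succ - d j.castSucc) % 2)) := by
  have hbd : ∀ t : Fin k, 1 ≤ d t.succ.castSucc ∧ d t.succ.castSucc < l + 1 := by
    intro t
    constructor
    · have := hmono (show (0 : Fin (k+2)) < t.succ.castSucc from Fin.lt_def.2 (by simp))
      omega
    · have := hmono (show t.succ.castSucc < Fin.last (k+1) from
        Fin.lt_def.2 (by simp [Fin.last]))
      omega
  have hd1 : ∀ t : Fin k, d t.castSucc.castSucc < d t.succ.castSucc := by
    intro t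
    exact hmono (Fin.lt_def.2 (by simp))
  have hd2 : ∀ t : Fin k, d t.succ.castSucc < d t.succ.succ := by
    intro t
    exact hmono (Fin.lt_def.2 (by simp))
  constructor
  · intro H i j
    have hcons : ∀ t : Fin k, (d t.succ.castSucc - d t.castSucc.castSucc) % 2
        = (d t.succ.succ - d t.succ.castSucc) % 2 := by
      intro t
      obtain ⟨hb1, hb2⟩ := hbd t
      set a : Fin (l+1) := ⟨d t.succ.castSucc - 1, by omega⟩ with haa
      set b : Fin (l+1) := ⟨d t.succ.castSucc, by omega⟩ with hbb
      have ha : a.val + 1 = d t.succ.castSucc := by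
        show d t.succ.castSucc - 1 + 1 = d t.succ.castSucc
        omega
      have hb : b.val = d t.succ.castSucc := rfl
      obtain ⟨m, hm⟩ := H t a b ha hb
      rw [sum_eq l k d hmono hlast t a b ha hb] at hm
      have hz : -((a.val - d t.castSucc.castSucc : ℕ) : ℤ)
          - ((d t.succ.succ - (b.val + 1) : ℕ) : ℤ) = 2 * m := by exact_mod_cast hm
      have hav : a.val = d t.succ.castSucc - 1 := rfl
      have h1 := hd1 t
      have h2 := hd2 t
      omega
    induction i using Fin.induction with
    | zero =>
      induction j using Fin.induction with
      | zero => rfl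
      | succ t ih => rw [← hcons t]; exact ih
    | succ t ih =>
      rw [show ((t.succ : Fin (k+1)).succ = t.succ.succ) from rfl, ← hcons t]
      exact ih
  · intro H t a b ha hb
    rw [sum_eq l k d hmono hlast t a b ha hb]
    have hpar := H t.castSucc t.succ
    have h1 := hd1 t
    have h2 := hd2 t
    have hcc : t.castSucc.succ = t.succ.castSucc := rfl
    rw [hcc] at hpar
    set x : ℕ := a.val - d t.castSucc.castSucc with hx
    set y : ℕ := d t.succ.succ - (b.val + 1) with hy
    refine ⟨-(((x + y) / 2 : ℕ) : ℤ), ?_⟩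
    have hz : -(x : ℤ) - y = 2 * (-(((x + y) / 2 : ℕ) : ℤ)) := by omega
    exact_mod_cast congrArg (Int.cast : ℤ → ℝ) hz
end

section
/- In type C_l realized in ℝ^l (positive roots λ_i ± λ_j for i < j and 2λ_i), for any simple root α and any subset Θ of simple roots whose connected component containing the long simple root α_l = 2λ_l is of type C_k (k ≥ 3), the contribution Σ_{β ∈ Δ⁺, c_δ(β) ≠ 0} ⟨α∨, β⟩ from that component Δ is even, where δ is the unique root of Δ linked to α and c_δ(β) is the coefficient of δ in β. -/
open RealInnerProductSpace

lemma pair_sub {n : ℕ} (a b j : Fin n) (hab : a ≠ b) (hja : j ≠ a) (hjb : j ≠ b) :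
    pairing (EuclideanSpace.single a (1:ℝ) - EuclideanSpace.single b 1)
      (EuclideanSpace.single b (1:ℝ) - EuclideanSpace.single j 1) = -1 := by
  simp [pairing, inner_sub_left, inner_sub_right, EuclideanSpace.inner_single_left,
    EuclideanSpace.single_apply, hab, hja, hjb, hab.symm, hja.symm, hjb.symm]
  rw [← real_inner_self_eq_norm_sq, inner_sub_left, inner_sub_right, inner_sub_right]
  simp [EuclideanSpace.inner_single_left, EuclideanSpace.single_apply, hab, hab.symm]
  norm_num

lemma pair_add {n : ℕ} (a b j : Fin n) (hab : a ≠ b) (hja : j ≠ a) (hjb : j ≠ b) :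
    pairing (EuclideanSpace.single a (1:ℝ) - EuclideanSpace.single b 1)
      (EuclideanSpace.single b (1:ℝ) + EuclideanSpace.single j 1) = -1 := by
  simp [pairing, inner_sub_left, inner_sub_right, inner_add_right,
    EuclideanSpace.inner_single_left,
    EuclideanSpace.single_apply, hab, hja, hjb, hab.symm, hja.symm, hjb.symm]
  rw [← real_inner_self_eq_norm_sq, inner_sub_left, inner_sub_right, inner_sub_right]
  simp [EuclideanSpace.inner_single_left, EuclideanSpace.single_apply, hab, hab.symm]
  norm_num

lemma pair_two {n : ℕ} (a b : Fin n) (hab : a ≠ b) :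
    pairing (EuclideanSpace.single a (1:ℝ) - EuclideanSpace.single b 1)
      ((2:ℝ) • EuclideanSpace.single b (1:ℝ)) = -2 := by
  simp [pairing, inner_sub_left, inner_sub_right, inner_smul_right,
    EuclideanSpace.inner_single_left,
    EuclideanSpace.single_apply, hab, hab.symm]
  rw [← real_inner_self_eq_norm_sq, inner_sub_left, inner_sub_right, inner_sub_right]
  simp [EuclideanSpace.inner_single_left, EuclideanSpace.single_apply, hab, hab.symm]
  norm_num

lemma card_filter_gt (l k : ℕ) (hk : 3 ≤ k) (hkl : k < l) :
    (Finset.univ.filter (fun j : Fin l => l - k < j.val)).card = k - 1 := by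
  rw [Finset.card_filter]
  rw [Fin.sum_univ_eq_sum_range (fun i => if l - k < i then 1 else 0)]
  rw [← Finset.card_filter]
  have : Finset.filter (fun i => l - k < i) (Finset.range l) = Finset.Ioo (l-k) l := by
    ext i; simp [Finset.mem_Ioo, and_comm]
  rw [this, Nat.card_Ioo]; omega

/-- In `C_l`, the contribution of a connected component `Δ` of type `C_k` (sitting at
the right end, containing the long root `α_l`) to the orientability sum is even:
for the simple root `α` linked to `δ = λ_{l−k} − λ_{l−k+1}`, the sum of `⟨α∨, β⟩`
over the positive roots `β` of `Δ` with nonzero coefficient on `δ` equals `−2k`. -/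
theorem stmt17 (l k : ℕ) (hk : 3 ≤ k) (hkl : k < l) :
    ((∑ j ∈ Finset.univ.filter (fun j : Fin l => l - k < j.val),
        (pairing
          (EuclideanSpace.single (⟨l - k - 1, by omega⟩ : Fin l) (1 : ℝ)
            - EuclideanSpace.single (⟨l - k, by omega⟩ : Fin l) (1 : ℝ))
          (EuclideanSpace.single (⟨l - k, by omega⟩ : Fin l) (1 : ℝ)
            - EuclideanSpace.single j (1 : ℝ)) +
         pairing
          (EuclideanSpace.single (⟨l - k - 1, by omega⟩ : Fin l) (1 : ℝ)
            - EuclideanSpace.single (⟨l - k, by omega⟩ : Fin l) (1 : ℝ))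
          (EuclideanSpace.single (⟨l - k, by omega⟩ : Fin l) (1 : ℝ)
            + EuclideanSpace.single j (1 : ℝ))))
      + pairing
          (EuclideanSpace.single (⟨l - k - 1, by omega⟩ : Fin l) (1 : ℝ)
            - EuclideanSpace.single (⟨l - k, by omega⟩ : Fin l) (1 : ℝ))
          ((2 : ℝ) • EuclideanSpace.single (⟨l - k, by omega⟩ : Fin l) (1 : ℝ))
      = -(2 * (k : ℝ)))
    ∧ ∃ m : ℤ,
      (∑ j ∈ Finset.univ.filter (fun j : Fin l => l - k < j.val),
        (pairing
          (EuclideanSpace.single (⟨l - k - 1, by omega⟩ : Fin l) (1 : ℝ)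
            - EuclideanSpace.single (⟨l - k, by omega⟩ : Fin l) (1 : ℝ))
          (EuclideanSpace.single (⟨l - k, by omega⟩ : Fin l) (1 : ℝ)
            - EuclideanSpace.single j (1 : ℝ)) +
         pairing
          (EuclideanSpace.single (⟨l - k - 1, by omega⟩ : Fin l) (1 : ℝ)
            - EuclideanSpace.single (⟨l - k, by omega⟩ : Fin l) (1 : ℝ))
          (EuclideanSpace.single (⟨l - k, by omega⟩ : Fin l) (1 : ℝ)
            + EuclideanSpace.single j (1 : ℝ))))
      + pairing
          (EuclideanSpace.single (⟨l - k - 1, by omega⟩ : Fin l) (1 : ℝ)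
            - EuclideanSpace.single (⟨l - k, by omega⟩ : Fin l) (1 : ℝ))
          ((2 : ℝ) • EuclideanSpace.single (⟨l - k, by omega⟩ : Fin l) (1 : ℝ))
      = 2 * m := by
  have hab : (⟨l - k - 1, by omega⟩ : Fin l) ≠ ⟨l - k, by omega⟩ := by
    simp [Fin.ext_iff]; omega
  have key : ∀ j ∈ Finset.univ.filter (fun j : Fin l => l - k < j.val),
      (pairing
          (EuclideanSpace.single (⟨l - k - 1, by omega⟩ : Fin l) (1 : ℝ)
            - EuclideanSpace.single (⟨l - k, by omega⟩ : Fin l) (1 : ℝ))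
          (EuclideanSpace.single (⟨l - k, by omega⟩ : Fin l) (1 : ℝ)
            - EuclideanSpace.single j (1 : ℝ)) +
         pairing
          (EuclideanSpace.single (⟨l - k - 1, by omega⟩ : Fin l) (1 : ℝ)
            - EuclideanSpace.single (⟨l - k, by omega⟩ : Fin l) (1 : ℝ))
          (EuclideanSpace.single (⟨l - k, by omega⟩ : Fin l) (1 : ℝ)
            + EuclideanSpace.single j (1 : ℝ))) = -2 := by
    intro j hj
    simp only [Finset.mem_filter] at hj
    have hja : j ≠ ⟨l - k - 1, by omega⟩ := by
      intro h; rw [h] at hj; simp at hj; omega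
    have hjb : j ≠ ⟨l - k, by omega⟩ := by
      intro h; rw [h] at hj; simp at hj
    rw [pair_sub _ _ _ hab hja hjb, pair_add _ _ _ hab hja hjb]; norm_num
  have hsum : ((∑ j ∈ Finset.univ.filter (fun j : Fin l => l - k < j.val),
        (pairing
          (EuclideanSpace.single (⟨l - k - 1, by omega⟩ : Fin l) (1 : ℝ)
            - EuclideanSpace.single (⟨l - k, by omega⟩ : Fin l) (1 : ℝ))
          (EuclideanSpace.single (⟨l - k, by omega⟩ : Fin l) (1 : ℝ)
            - EuclideanSpace.single j (1 : ℝ)) +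
         pairing
          (EuclideanSpace.single (⟨l - k - 1, by omega⟩ : Fin l) (1 : ℝ)
            - EuclideanSpace.single (⟨l - k, by omega⟩ : Fin l) (1 : ℝ))
          (EuclideanSpace.single (⟨l - k, by omega⟩ : Fin l) (1 : ℝ)
            + EuclideanSpace.single j (1 : ℝ))))
      + pairing
          (EuclideanSpace.single (⟨l - k - 1, by omega⟩ : Fin l) (1 : ℝ)
            - EuclideanSpace.single (⟨l - k, by omega⟩ : Fin l) (1 : ℝ))
          ((2 : ℝ) • EuclideanSpace.single (⟨l - k, by omega⟩ : Fin l) (1 : ℝ))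
      : ℝ) = -(2 * (k : ℝ)) := by
    rw [Finset.sum_congr rfl key, Finset.sum_const, card_filter_gt l k hk hkl,
      pair_two _ _ hab]
    have h1 : (1:ℕ) ≤ k := by omega
    rw [nsmul_eq_mul, Nat.cast_sub h1]
    push_cast
    ring
  refine ⟨hsum, ⟨-(k : ℤ), ?_⟩⟩
  rw [hsum]; push_cast; ring
end

section
/- Let H ∈ cl 𝔞⁺ and Θ(H) = {α ∈ Σ : α(H) = 0}. Then for the stable set of roots at w = 1 in the maximal flag case, Π⁻(H,1) = {β ∈ Π : β(H) < 0} equals Π⁻ \ ⟨Θ(H)⟩, and for every α ∈ Θ(H) the sum Σ_{β ∈ Π⁺ \ ⟨Θ(H)⟩} n_β ⟨α∨, β⟩ is even. -/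
open RealInnerProductSpace

section Aux
variable {V : Type*} [NormedAddCommGroup V] [InnerProductSpace ℝ V]

lemma closure_inner_zero (H : V) (T : Set V) (hT : ∀ γ ∈ T, ⟪γ, H⟫ = 0)
    {x : V} (hx : x ∈ AddSubgroup.closure T) : ⟪x, H⟫ = 0 := by
  induction hx using AddSubgroup.closure_induction with
  | mem γ hγ => exact hT γ hγ
  | zero => simp
  | add a b _ _ ha hb => simp [inner_add_left, ha, hb]
  | neg a _ ha => simp [inner_neg_left, ha]

lemma inner_reflect_left (α β H : V) :
    ⟪reflect α β, H⟫ = ⟪β, H⟫ - pairing α β * ⟪α, H⟫ := by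
  simp [reflect, inner_sub_left, real_inner_smul_left]

lemma pairing_self {α : V} (hα : α ≠ 0) : pairing α α = 2 := by
  have : ⟪α, α⟫ ≠ 0 := fun h => hα (inner_self_eq_zero.mp h)
  rw [pairing, mul_div_assoc, div_self this, mul_one]

lemma pairing_reflect_self {α β : V} (hα : α ≠ 0) :
    pairing α (reflect α β) = -pairing α β := by
  have h : ⟪α, α⟫ ≠ 0 := fun h => hα (inner_self_eq_zero.mp h)
  have h2 : ⟪α, reflect α β⟫ = ⟪α, β⟫ - pairing α β * ⟪α, α⟫ := by
    simp [reflect, inner_sub_right, real_inner_smul_right]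
  rw [show pairing α (reflect α β) = 2 * ⟪α, reflect α β⟫ / ⟪α, α⟫ from rfl, h2]
  rw [show pairing α β = 2 * ⟪α, β⟫ / ⟪α, α⟫ from rfl]
  field_simp
  ring

lemma reflect_reflect {α β : V} (hα : α ≠ 0) : reflect α (reflect α β) = β := by
  rw [show reflect α (reflect α β) = reflect α β - pairing α (reflect α β) • α from rfl,
      pairing_reflect_self hα, reflect]
  module

end Aux

/-- For `H ∈ cl 𝔞⁺` (identifying roots with vectors via the inner product) and
`Θ(H) = {α ∈ Σ : ⟨α, H⟩ = 0}`: the set `Π⁻(H,1) = {β ∈ Π : β(H) < 0}` equals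
`Π⁻ \ ⟨Θ(H)⟩`, and for every `α ∈ Θ(H)` the sum
`Σ_{β ∈ Π⁺ \ ⟨Θ(H)⟩} n_β ⟨α∨, β⟩` is even. -/
theorem stmt19 {V : Type*} [NormedAddCommGroup V] [InnerProductSpace ℝ V] [DecidableEq V]
    (Φ ΦP S : Finset V) (hΦ : IsRootSystem Φ) (hP : IsPositiveSystem Φ ΦP)
    (hS : IsSimpleSystem ΦP S) (n : V → ℕ)
    (hnpos : ∀ β ∈ Φ, 0 < n β)
    (hninv : ∀ α ∈ Φ, ∀ β ∈ Φ, n (reflect α β) = n β)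
    (H : V) (hH : ∀ β ∈ ΦP, 0 ≤ ⟪β, H⟫)
    (ΘR : Finset V)
    (hΘR : ∀ β, β ∈ ΘR ↔
      β ∈ Φ ∧ β ∈ AddSubgroup.closure ((S.filter (fun α => ⟪α, H⟫ = 0) : Finset V) : Set V)) :
    (Φ.filter (fun β => ⟪β, H⟫ < 0) = (Φ \ ΦP) \ ΘR) ∧
    ∀ α ∈ S, ⟪α, H⟫ = 0 →
      ∃ m : ℤ, ∑ β ∈ ΦP \ ΘR, (n β : ℝ) * pairing α β = 2 * m := by
  obtain ⟨hne, hrefl, hint⟩ := hΦ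
  obtain ⟨hPsub, hxor⟩ := hP
  obtain ⟨hSsub, hcomb⟩ := hS
  set Θ : Finset V := S.filter (fun α => ⟪α, H⟫ = 0) with hΘdef
  have L1 : ∀ x ∈ AddSubgroup.closure (Θ : Set V), ⟪x, H⟫ = 0 := by
    intro x hx
    refine closure_inner_zero H _ (fun γ hγ => ?_) hx
    exact (Finset.mem_filter.mp hγ).2
  have L2 : ∀ β ∈ ΦP, ⟪β, H⟫ = 0 → β ∈ AddSubgroup.closure (Θ : Set V) := by
    intro β hβ hβH
    obtain ⟨c, hc⟩ := hcomb β hβ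
    have hterms : ∀ γ ∈ S, 0 ≤ (c γ : ℝ) * ⟪γ, H⟫ := fun γ hγ =>
      mul_nonneg (by positivity) (hH γ (hSsub hγ))
    have hsum : ∑ γ ∈ S, (c γ : ℝ) * ⟪γ, H⟫ = 0 := by
      rw [← hβH, hc, sum_inner]
      exact Finset.sum_congr rfl fun γ _ => (real_inner_smul_left γ H (c γ)).symm
    have hzero := (Finset.sum_eq_zero_iff_of_nonneg hterms).mp hsum
    rw [hc]
    refine AddSubgroup.sum_mem _ (fun γ hγ => ?_)
    rcases Nat.eq_zero_or_pos (c γ) with h0 | hpos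
    · rw [h0]
      simpa using AddSubgroup.zero_mem _
    · have hγH : ⟪γ, H⟫ = 0 := by
        rcases mul_eq_zero.mp (hzero γ hγ) with h | h
        · exact absurd (Nat.cast_eq_zero.mp h) hpos.ne'
        · exact h
      have hγΘ : γ ∈ Θ := Finset.mem_filter.mpr ⟨hγ, hγH⟩
      rw [Nat.cast_smul_eq_nsmul ℝ (c γ) γ]
      exact AddSubgroup.nsmul_mem _ (AddSubgroup.subset_closure hγΘ) _
  constructor
  · ext β
    simp only [Finset.mem_filter, Finset.mem_sdiff, hΘR]
    constructor
    · rintro ⟨hβΦ, hβH⟩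
      refine ⟨⟨hβΦ, fun hβP => absurd (hH β hβP) (not_le.mpr hβH)⟩, ?_⟩
      rintro ⟨-, hcl⟩
      exact absurd (L1 β hcl) (ne_of_lt hβH)
    · rintro ⟨⟨hβΦ, hβP⟩, hβΘ⟩
      refine ⟨hβΦ, ?_⟩
      have hneg : -β ∈ ΦP := by
        rcases hxor β hβΦ with ⟨h1, -⟩ | ⟨h1, -⟩
        · exact absurd h1 hβP
        · exact h1
      have hle : ⟪β, H⟫ ≤ 0 := by
        have := hH _ hneg
        rw [inner_neg_left] at this
        linarith
      rcases lt_or_eq_of_le hle with h | h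
      · exact h
      · exfalso
        apply hβΘ
        refine ⟨hβΦ, ?_⟩
        have : -β ∈ AddSubgroup.closure (Θ : Set V) := by
          apply L2 _ hneg
          rw [inner_neg_left, h, neg_zero]
        simpa using AddSubgroup.neg_mem _ this
  · intro α hαS hαH
    have hαΦ : α ∈ Φ := hPsub (hSsub hαS)
    have hα0 : α ≠ 0 := hne α hαΦ
    have hαΘ : α ∈ Θ := Finset.mem_filter.mpr ⟨hαS, hαH⟩
    have hαcl : α ∈ AddSubgroup.closure (Θ : Set V) := AddSubgroup.subset_closure hαΘ
    have hkmem : ∀ β ∈ Φ, pairing α β • α ∈ AddSubgroup.closure (Θ : Set V) := by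
      intro β hβΦ
      obtain ⟨k, hk⟩ := hint α hαΦ β hβΦ
      rw [hk, Int.cast_smul_eq_zsmul ℝ k α]
      exact AddSubgroup.zsmul_mem _ hαcl k
    have hclrefl : ∀ β ∈ Φ, reflect α β ∈ AddSubgroup.closure (Θ : Set V) →
        β ∈ AddSubgroup.closure (Θ : Set V) := by
      intro β hβΦ h
      have := AddSubgroup.add_mem _ h (hkmem β hβΦ)
      rw [reflect, sub_add_cancel] at this
      exact this
    have hT : ∀ β ∈ ΦP \ ΘR, reflect α β ∈ ΦP \ ΘR := by
      intro β hβ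
      rw [Finset.mem_sdiff] at hβ ⊢
      obtain ⟨hβP, hβΘ⟩ := hβ
      have hβΦ : β ∈ Φ := hPsub hβP
      have hβcl : β ∉ AddSubgroup.closure (Θ : Set V) := fun h => hβΘ ((hΘR β).mpr ⟨hβΦ, h⟩)
      have hrΦ : reflect α β ∈ Φ := hrefl α hαΦ β hβΦ
      have hrH : ⟪reflect α β, H⟫ = ⟪β, H⟫ := by
        rw [inner_reflect_left, hαH, mul_zero, sub_zero]
      have hrP : reflect α β ∈ ΦP := by
        rcases hxor _ hrΦ with ⟨h1, -⟩ | ⟨h1, -⟩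
        · exact h1
        · exfalso
          apply hβcl
          apply L2 β hβP
          have h2 := hH _ h1
          rw [inner_neg_left, hrH] at h2
          exact le_antisymm (by linarith) (hH β hβP)
      refine ⟨hrP, fun h => ?_⟩
      exact hβcl (hclrefl β hβΦ ((hΘR _).mp h).2)
    refine ⟨0, ?_⟩
    rw [Int.cast_zero, mul_zero]
    refine Finset.sum_involution (fun β _ => reflect α β) ?_ ?_
      (fun β hβ => hT β hβ) (fun β hβ => reflect_reflect hα0)
    · intro β hβ
      have hβΦ : β ∈ Φ := hPsub (Finset.mem_sdiff.mp hβ).1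
      rw [hninv α hαΦ β hβΦ, pairing_reflect_self hα0]
      ring
    · intro β hβ hne2 heq
      apply hne2
      have h0 : pairing α β • α = 0 := by
        have : β - pairing α β • α = β := heq
        linear_combination (norm := module) -this
      rcases smul_eq_zero.mp h0 with h | h
      · rw [h, mul_zero]
      · exact absurd h hα0
end
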